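/- Let k ≥ 1 and σ ≥ k+1, let β > 0, and let N ≥ 4 be an even integer with ε ≤ N^{−1} and τ = (σ ε / β) ln N ≤ 1/2. Consider the Shishkin mesh x_i = 2(1−τ)i/N for 0 ≤ i ≤ N/2 and x_i = 1−τ + 2τ(i − N/2)/N for N/2 < i ≤ N, with elements I_i = [x_{i−1}, x_i]. Let u ∈ C^{k+2}([0,1]) admit a decomposition u = S + E with |S^{(m)}(x)| ≤ C_d and |E^{(m)}(x)| ≤ C_d ε^{−m} e^{−β(1−x)/ε} for all 0 ≤ m ≤ k+2 and x ∈ [0,1], let P⁻u be its elementwise Gauss–Radau projection, and set η = P⁻u − u on [0, 1−τ]. Then there is a constant C depending only on k, β, σ, C_d (and not on ε or N) such that for all 0 ≤ i ≤ N/2 − 1, {η′(x_i)}² ≤ C ( N^{−2k} + N^{−(k+1/2)} ε^{−3/2} N^{−σ} + ε^{−2} N^{−2σ} ), where {η′(x_i)} = (η′(x_i^+) + η′(x_i^−))/2 for 1 ≤ i ≤ N/2−1 (one-sided derivative values from the adjacent elements) and {η′(x_0)} = η′(x_0^+). -/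

import Mathlib

open Set

section Stmt11Aux
open Polynomial

lemma poly_intable (p : Polynomial ℝ) (f : ℝ → ℝ) (hf : Continuous f) (a b : ℝ) :
    IntervalIntegrable (fun s => p.eval s * f s) MeasureTheory.volume a b :=
  ((p.continuous_aeval).mul hf).intervalIntegrable a b

lemma ref_inj {k : ℕ} (hk : 1 ≤ k) (p : Polynomial ℝ) (hdeg : p.natDegree ≤ k)
    (hmom : ∀ j < k, ∫ s in (0:ℝ)..1, p.eval s * s ^ j = 0)
    (hend : p.eval 1 = 0) : p = 0 := by
  obtain ⟨r, hr⟩ : (X - C 1) ∣ p := dvd_iff_isRoot.2 hend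
  by_contra hp
  have hrne : r ≠ 0 := by rintro rfl; simp at hr; exact hp hr
  have hdegr : r.natDegree ≤ k - 1 := by
    have h1 : p.natDegree = 1 + r.natDegree := by
      rw [hr, natDegree_mul (X_sub_C_ne_zero 1) hrne, natDegree_X_sub_C]
    omega
  -- moments against r vanish
  have hmr : ∫ s in (0:ℝ)..1, p.eval s * r.eval s = 0 := by
    have hlt : r.natDegree < k := by omega
    have : ∀ s : ℝ, p.eval s * r.eval s
        = ∑ j ∈ Finset.range k, r.coeff j * (p.eval s * s ^ j) := by
      intro s
      rw [eval_eq_sum_range' hlt]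
      rw [Finset.mul_sum]
      congr 1; ext j; ring
    rw [intervalIntegral.integral_congr (fun s _ => this s)]
    rw [intervalIntegral.integral_finset_sum]
    · refine Finset.sum_eq_zero fun j hj => ?_
      rw [intervalIntegral.integral_const_mul, hmom j (Finset.mem_range.1 hj), mul_zero]
    · intro j _
      exact (continuous_const.mul ((p.continuous_aeval).mul (continuous_pow j))).intervalIntegrable _ _
  -- but ∫ (1-s) r(s)^2 > 0
  have hposint : 0 < ∫ s in (0:ℝ)..1, (1 - s) * r.eval s ^ 2 := by
    have hfi : IntervalIntegrable (fun s => (1 - s) * r.eval s ^ 2) MeasureTheory.volume 0 1 :=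
      (((continuous_const.sub continuous_id).mul ((r.continuous_aeval).pow 2))).intervalIntegrable _ _
    have h0 : (fun _ => (0:ℝ)) ≤ᵐ[MeasureTheory.volume.restrict (uIoc (0:ℝ) 1)]
        fun s => (1 - s) * r.eval s ^ 2 := by
      rw [uIoc_of_le (by norm_num : (0:ℝ) ≤ 1)]
      refine (MeasureTheory.ae_restrict_iff' measurableSet_Ioc).2 ?_
      filter_upwards with s hs
      have : (0:ℝ) ≤ 1 - s := by linarith [hs.2]
      positivity
    rw [intervalIntegral.integral_pos_iff_support_of_nonneg_ae' h0 hfi]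
    refine ⟨by norm_num, ?_⟩
    have hroots : {s : ℝ | r.IsRoot s}.Finite := Polynomial.finite_setOf_isRoot hrne
    have hsub : Ioo (0:ℝ) 1 \ {s : ℝ | r.IsRoot s}
        ⊆ Function.support (fun s => (1 - s) * r.eval s ^ 2) ∩ Ioc 0 1 := by
      rintro s ⟨hs, hns⟩
      refine ⟨?_, Ioo_subset_Ioc_self hs⟩
      have h1 : (0:ℝ) < 1 - s := by linarith [hs.2]
      have h2 : r.eval s ≠ 0 := hns
      simp only [Function.mem_support]
      positivity
    calc (0:ENNReal) < 1 := by norm_num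
      _ = MeasureTheory.volume (Ioo (0:ℝ) 1 \ {s : ℝ | r.IsRoot s}) := by
          rw [MeasureTheory.measure_diff_null (hroots.measure_zero _), Real.volume_Ioo]; norm_num
      _ ≤ _ := MeasureTheory.measure_mono hsub
  have : ∫ s in (0:ℝ)..1, p.eval s * r.eval s = -∫ s in (0:ℝ)..1, (1 - s) * r.eval s ^ 2 := by
    rw [← intervalIntegral.integral_neg]
    refine intervalIntegral.integral_congr fun s _ => ?_
    rw [hr]; simp [eval_mul]; ring
  rw [hmr] at this
  linarith

noncomputable def stmt11_pc (k : ℕ) (c : Fin (k+1) → ℝ) : Polynomial ℝ :=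
  ∑ i, C (c i) * X ^ (i : ℕ)

lemma stmt11_pc_eval (k : ℕ) (c : Fin (k+1) → ℝ) (s : ℝ) :
    (stmt11_pc k c).eval s = ∑ i : Fin (k+1), c i * s ^ (i : ℕ) := by
  simp [stmt11_pc, eval_finset_sum]

lemma stmt11_pc_natDegree (k : ℕ) (c : Fin (k+1) → ℝ) :
    (stmt11_pc k c).natDegree ≤ k := by
  refine Polynomial.natDegree_sum_le_of_forall_le _ _ fun i _ => ?_
  calc (C (c i) * X ^ (i:ℕ)).natDegree ≤ (C (c i)).natDegree + (X ^ (i:ℕ) : Polynomial ℝ).natDegree :=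
        natDegree_mul_le
    _ ≤ k := by simp [natDegree_X_pow]; omega

lemma stmt11_pc_coeff (k : ℕ) (c : Fin (k+1) → ℝ) (i : Fin (k+1)) :
    (stmt11_pc k c).coeff (i : ℕ) = c i := by
  rw [stmt11_pc, finset_sum_coeff]
  rw [Finset.sum_eq_single i]
  · simp
  · intro j _ hj
    have : (i : ℕ) ≠ (j : ℕ) := fun h => hj (Fin.ext h.symm)
    simp only [coeff_C_mul, coeff_X_pow, if_neg this, mul_zero]
  · simp

lemma stmt11_pc_add (k : ℕ) (c c' : Fin (k+1) → ℝ) :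
    stmt11_pc k (c + c') = stmt11_pc k c + stmt11_pc k c' := by
  simp [stmt11_pc, ← Finset.sum_add_distrib, C_add, add_mul]

lemma stmt11_pc_smul (k : ℕ) (a : ℝ) (c : Fin (k+1) → ℝ) :
    stmt11_pc k (a • c) = C a * stmt11_pc k c := by
  simp [stmt11_pc, Finset.mul_sum, C_mul, smul_eq_mul, mul_assoc]

noncomputable def stmt11_phi (k : ℕ) : (Fin (k+1) → ℝ) →ₗ[ℝ] (Fin (k+1) → ℝ) where
  toFun c := fun j => if (j : ℕ) < k
    then ∫ s in (0:ℝ)..1, (stmt11_pc k c).eval s * s ^ (j:ℕ)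
    else (stmt11_pc k c).eval 1
  map_add' c c' := by
    funext j
    by_cases h : (j : ℕ) < k
    · simp only [h, if_true, stmt11_pc_add, eval_add, Pi.add_apply]
      rw [← intervalIntegral.integral_add]
      · congr 1; funext s; ring
      · exact (((stmt11_pc k c).continuous_aeval).mul (continuous_pow _)).intervalIntegrable _ _
      · exact (((stmt11_pc k c').continuous_aeval).mul (continuous_pow _)).intervalIntegrable _ _
    · simp [h, stmt11_pc_add]
  map_smul' a c := by
    funext j
    by_cases h : (j : ℕ) < k
    · simp only [h, if_true, stmt11_pc_smul, eval_mul, eval_C, RingHom.id_apply, Pi.smul_apply,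
        smul_eq_mul]
      rw [← intervalIntegral.integral_const_mul]
      congr 1; funext s; ring
    · simp [h, stmt11_pc_smul]

lemma stmt11_phi_bij (k : ℕ) (hk : 1 ≤ k) : Function.Bijective (stmt11_phi k) := by
  have hinj : Function.Injective (stmt11_phi k) := by
    rw [← LinearMap.ker_eq_bot, LinearMap.ker_eq_bot']
    intro c hc
    have hzero : stmt11_pc k c = 0 := by
      refine ref_inj hk _ (stmt11_pc_natDegree k c) ?_ ?_
      · intro j hj
        have := congrFun hc ⟨j, by omega⟩
        simpa [stmt11_phi, hj] using this
      · have := congrFun hc ⟨k, by omega⟩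
        simpa [stmt11_phi] using this
    funext i
    have := stmt11_pc_coeff k c i
    rw [hzero] at this
    simpa using this.symm
  exact ⟨hinj, (LinearMap.injective_iff_surjective).1 hinj⟩

lemma stmt11_ref_exists (k : ℕ) (hk : 1 ≤ k) (v : Fin k → ℝ) (e : ℝ) :
    ∃ p : Polynomial ℝ, p.natDegree ≤ k ∧
      (∀ j : ℕ, (hj : j < k) → (∫ s in (0:ℝ)..1, p.eval s * s ^ j) = v ⟨j, hj⟩) ∧
      p.eval 1 = e := by
  obtain ⟨c, hc⟩ := (stmt11_phi_bij k hk).2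
    (fun j => if h : (j : ℕ) < k then v ⟨j, h⟩ else e)
  refine ⟨stmt11_pc k c, stmt11_pc_natDegree k c, ?_, ?_⟩
  · intro j hj
    have := congrFun hc ⟨j, by omega⟩
    simpa [stmt11_phi, hj] using this
  · have := congrFun hc ⟨k, by omega⟩
    simpa [stmt11_phi] using this

/-- Reference-element stability bound. -/
lemma stmt11_ref_bound (k : ℕ) (hk : 1 ≤ k) :
    ∃ Ck > 0, ∀ (p : Polynomial ℝ) (M : ℝ), p.natDegree ≤ k →
      (∀ j < k, |∫ s in (0:ℝ)..1, p.eval s * s ^ j| ≤ M) →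
      |p.eval 1| ≤ M →
      ∀ s ∈ Icc (0:ℝ) 1, |p.eval s| ≤ Ck * M ∧ |p.derivative.eval s| ≤ Ck * M := by
  have hbij := stmt11_phi_bij k hk
  set e := LinearEquiv.ofBijective (stmt11_phi k) hbij with he
  set L := LinearMap.toContinuousLinearMap (e.symm.toLinearMap) with hL
  set C0 := ‖L‖ + 1 with hC0
  refine ⟨(k+1)^2 * (k+1) * C0, by positivity, ?_⟩
  intro p M hdeg hmom hend s hs
  have hM : 0 ≤ M := le_trans (abs_nonneg _) hend
  set c : Fin (k+1) → ℝ := fun i => p.coeff (i : ℕ) with hcdef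
  have hpc : stmt11_pc k c = p := by
    conv_rhs => rw [p.as_sum_range' (k+1) (by omega)]
    rw [stmt11_pc, Fin.sum_univ_eq_sum_range (fun i => C (p.coeff i) * X ^ i)]
    congr 1; funext i
    rw [C_mul_X_pow_eq_monomial]
  -- bound on ‖Φ c‖
  have hphin : ‖stmt11_phi k c‖ ≤ M := by
    rw [pi_norm_le_iff_of_nonneg hM]
    intro j
    by_cases h : (j : ℕ) < k
    · simp only [stmt11_phi, LinearMap.coe_mk, AddHom.coe_mk, h, if_true, hpc]
      exact hmom _ h
    · simp only [stmt11_phi, LinearMap.coe_mk, AddHom.coe_mk, h, if_false, hpc]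
      exact hend
  have hcnorm : ∀ i, |c i| ≤ C0 * M := by
    intro i
    have h1 : c = L (stmt11_phi k c) := by
      show c = e.symm (e c)
      simp
    calc |c i| ≤ ‖c‖ := by
          rw [hcdef]
          exact norm_le_pi_norm (fun i : Fin (k+1) => p.coeff (i:ℕ)) i
      _ = ‖L (stmt11_phi k c)‖ := by rw [← h1]
      _ ≤ ‖L‖ * ‖stmt11_phi k c‖ := L.le_opNorm _
      _ ≤ ‖L‖ * M := by
          exact mul_le_mul_of_nonneg_left hphin (norm_nonneg _)
      _ ≤ C0 * M := by
          apply mul_le_mul_of_nonneg_right _ hM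
          rw [hC0]; linarith
  have hC0M : 0 ≤ C0 * M := mul_nonneg (by rw [hC0]; positivity) hM
  have hsabs : ∀ (i : ℕ), |s| ^ i ≤ 1 := fun i =>
    pow_le_one₀ (abs_nonneg s) (abs_le.2 ⟨by linarith [hs.1], hs.2⟩)
  constructor
  · rw [← hpc, stmt11_pc_eval]
    calc |∑ i : Fin (k+1), c i * s ^ (i:ℕ)| ≤ ∑ i : Fin (k+1), |c i * s ^ (i:ℕ)| :=
          Finset.abs_sum_le_sum_abs _ _
      _ ≤ ∑ _i : Fin (k+1), C0 * M := by
          refine Finset.sum_le_sum fun i _ => ?_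
          rw [abs_mul, abs_pow]
          calc |c i| * |s| ^ (i:ℕ) ≤ (C0 * M) * 1 :=
                mul_le_mul (hcnorm i) (hsabs _) (by positivity) (by positivity)
            _ = C0 * M := mul_one _
      _ = ((k:ℝ)+1) * (C0 * M) := by rw [Finset.sum_const]; simp
      _ ≤ ((k:ℝ)+1)^2 * ((k:ℝ)+1) * (C0 * M) := by
          refine mul_le_mul_of_nonneg_right ?_ hC0M
          nlinarith [Nat.cast_nonneg (α := ℝ) k]
      _ = (k+1)^2 * (k+1) * C0 * M := by push_cast; ring
  · rw [← hpc]
    have hder : (stmt11_pc k c).derivative = ∑ i : Fin (k+1), C (c i * (i:ℕ)) * X ^ ((i:ℕ) - 1) := by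
      rw [stmt11_pc, derivative_sum]
      congr 1; funext i
      rw [derivative_C_mul, derivative_X_pow]
      rw [C_mul]
      ring
    rw [hder]
    rw [eval_finset_sum]
    calc |∑ i : Fin (k+1), (C (c i * (i:ℕ)) * X ^ ((i:ℕ)-1)).eval s|
        ≤ ∑ i : Fin (k+1), |c i * (i:ℕ) * s ^ ((i:ℕ)-1)| := by
          refine le_trans (Finset.abs_sum_le_sum_abs _ _) ?_
          refine le_of_eq (Finset.sum_congr rfl fun i _ => ?_)
          simp
      _ ≤ ∑ _i : Fin (k+1), (k+1) * (C0 * M) := by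
          refine Finset.sum_le_sum fun i _ => ?_
          rw [abs_mul, abs_mul, abs_pow]
          have h1 : |((i:ℕ):ℝ)| ≤ (k:ℝ)+1 := by
            rw [abs_of_nonneg (Nat.cast_nonneg _)]
            exact_mod_cast Nat.le_of_lt_succ i.isLt |>.trans (Nat.le_succ k)
          calc |c i| * |((i:ℕ):ℝ)| * |s| ^ ((i:ℕ)-1)
              ≤ (C0 * M) * ((k:ℝ)+1) * 1 := by
                refine mul_le_mul (mul_le_mul (hcnorm i) h1 (abs_nonneg _) (by positivity))
                  (hsabs _) (by positivity) (by positivity)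
            _ = ((k:ℝ)+1) * (C0 * M) := by ring
      _ = ((k:ℝ)+1) * (((k:ℝ)+1) * (C0 * M)) := by rw [Finset.sum_const]; simp
      _ = ((k:ℝ)+1) * ((k:ℝ)+1) * (C0 * M) := by ring
      _ ≤ ((k:ℝ)+1)^2 * ((k:ℝ)+1) * (C0 * M) := by
          refine mul_le_mul_of_nonneg_right ?_ hC0M
          nlinarith [Nat.cast_nonneg (α := ℝ) k]
      _ = (k+1)^2 * (k+1) * C0 * M := by push_cast; ring

lemma stmt11_cov (g : ℝ → ℝ) (a h : ℝ) (hh : h ≠ 0) :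
    ∫ t in a..(a+h), g t = h * ∫ s in (0:ℝ)..1, g (a + h * s) := by
  rw [intervalIntegral.integral_comp_add_mul g hh a, smul_eq_mul, ← mul_assoc,
    mul_inv_cancel₀ hh, one_mul, mul_zero, add_zero, mul_one]

lemma stmt11_expand (k : ℕ) (q : Polynomial ℝ) (hq : q.natDegree < k) (f : ℝ → ℝ)
    (hf : ContinuousOn f (Icc (0:ℝ) 1)) :
    ∫ s in (0:ℝ)..1, f s * q.eval s
      = ∑ j ∈ Finset.range k, q.coeff j * ∫ s in (0:ℝ)..1, f s * s ^ j := by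
  have hpt : ∀ s : ℝ, f s * q.eval s = ∑ j ∈ Finset.range k, q.coeff j * (f s * s ^ j) := by
    intro s
    rw [eval_eq_sum_range' hq, Finset.mul_sum]
    congr 1; ext j; ring
  have hint : ∀ j : ℕ, IntervalIntegrable (fun s => f s * s ^ j) MeasureTheory.volume 0 1 := by
    intro j
    apply ContinuousOn.intervalIntegrable
    rw [uIcc_of_le (by norm_num : (0:ℝ) ≤ 1)]
    exact hf.mul (continuous_pow j).continuousOn
  rw [intervalIntegral.integral_congr (fun s _ => hpt s), intervalIntegral.integral_finset_sum]
  · exact Finset.sum_congr rfl fun j _ => intervalIntegral.integral_const_mul _ _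
  · exact fun j _ => (hint j).const_mul _

/-- Element-level stability bound for the Gauss–Radau projection conditions. -/
lemma stmt11_elem_bound (k : ℕ) (hk : 1 ≤ k) :
    ∃ Ck > 0, ∀ (a h : ℝ), 0 < h → ∀ (p : Polynomial ℝ) (w : ℝ → ℝ) (M : ℝ),
      p.natDegree ≤ k →
      (∀ q : Polynomial ℝ, q.natDegree ≤ k - 1 →
        (∫ t in a..(a+h), p.eval t * q.eval t) = ∫ t in a..(a+h), w t * q.eval t) →
      p.eval (a+h) = w (a+h) →
      (∀ t ∈ Icc a (a+h), |w t| ≤ M) →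
      ∀ x ∈ Icc a (a+h), |p.derivative.eval x| ≤ Ck * M / h := by
  obtain ⟨Ck, hCkpos, href⟩ := stmt11_ref_bound k hk
  refine ⟨Ck, hCkpos, ?_⟩
  intro a h hh p w M hdeg hmom hend hw x hx
  have hM : 0 ≤ M := le_trans (abs_nonneg _) (hw a ⟨le_refl a, by linarith⟩)
  set P : Polynomial ℝ := p.comp (C a + C h * X) with hP
  have hPdeg : P.natDegree ≤ k := by
    calc P.natDegree ≤ p.natDegree * (C a + C h * X).natDegree := natDegree_comp_le
      _ ≤ k * 1 := by
          refine Nat.mul_le_mul hdeg ?_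
          refine le_trans (natDegree_add_le _ _) ?_
          simp only [natDegree_C, max_le_iff]
          exact ⟨Nat.zero_le 1, le_trans (natDegree_C_mul_le _ _) natDegree_X_le⟩
      _ = k := mul_one k
  have hPeval : ∀ s : ℝ, P.eval s = p.eval (a + h * s) := by
    intro s; rw [hP, eval_comp]; simp
  have hmomP : ∀ j < k, |∫ s in (0:ℝ)..1, P.eval s * s ^ j| ≤ M := by
    intro j hj
    set qj : Polynomial ℝ := (C h⁻¹ * (X - C a)) ^ j with hqj
    have hqjdeg : qj.natDegree ≤ k - 1 := by
      calc qj.natDegree ≤ j * (C h⁻¹ * (X - C a)).natDegree := natDegree_pow_le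
        _ ≤ j * 1 := Nat.mul_le_mul_left _
            (le_trans (natDegree_C_mul_le _ _) (natDegree_X_sub_C _).le)
        _ ≤ k - 1 := by omega
    have hqjeval : ∀ t : ℝ, qj.eval t = (h⁻¹ * (t - a)) ^ j := by
      intro t; rw [hqj]; simp
    have hcv : ∫ s in (0:ℝ)..1, P.eval s * s ^ j
        = h⁻¹ * ∫ t in a..(a+h), p.eval t * qj.eval t := by
      rw [stmt11_cov (fun t => p.eval t * qj.eval t) a h hh.ne', ← mul_assoc,
        inv_mul_cancel₀ hh.ne', one_mul]
      refine intervalIntegral.integral_congr fun s _ => ?_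
      show P.eval s * s ^ j = p.eval (a + h * s) * qj.eval (a + h * s)
      rw [hPeval, hqjeval]
      congr 1
      rw [add_sub_cancel_left, ← mul_assoc, inv_mul_cancel₀ hh.ne', one_mul]
    rw [hcv, hmom qj hqjdeg]
    have hbnd : ∀ t ∈ uIoc a (a+h), ‖w t * qj.eval t‖ ≤ M := by
      intro t ht
      rw [uIoc_of_le (by linarith : a ≤ a + h)] at ht
      have ht1 : a ≤ t := ht.1.le
      have ht2 : t ≤ a + h := ht.2
      rw [Real.norm_eq_abs, abs_mul, hqjeval]
      have h0 : 0 ≤ h⁻¹ * (t - a) := mul_nonneg (by positivity) (by linarith)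
      have h1' : h⁻¹ * (t - a) ≤ 1 := by
        rw [← inv_mul_cancel₀ hh.ne']
        exact mul_le_mul_of_nonneg_left (by linarith) (by positivity)
      have h1 : |(h⁻¹ * (t - a)) ^ j| ≤ 1 := by
        rw [abs_pow, abs_of_nonneg h0]
        exact pow_le_one₀ h0 h1'
      calc |w t| * |(h⁻¹ * (t - a)) ^ j| ≤ M * 1 :=
            mul_le_mul (hw t ⟨ht1, ht2⟩) h1 (abs_nonneg _) hM
        _ = M := mul_one M
    have hnorm := intervalIntegral.norm_integral_le_of_norm_le_const hbnd
    rw [Real.norm_eq_abs] at hnorm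
    have h2 : |a + h - a| = h := by rw [add_sub_cancel_left, abs_of_pos hh]
    rw [h2] at hnorm
    rw [abs_mul, abs_inv, abs_of_pos hh]
    calc h⁻¹ * |∫ t in a..(a+h), w t * qj.eval t| ≤ h⁻¹ * (M * h) :=
          mul_le_mul_of_nonneg_left hnorm (by positivity)
      _ = M := by field_simp
  have hendP : |P.eval 1| ≤ M := by
    rw [hPeval, mul_one, hend]
    exact hw _ ⟨by linarith, le_refl _⟩
  have hsmem : (x - a) / h ∈ Icc (0:ℝ) 1 := by
    constructor
    · exact div_nonneg (by linarith [hx.1]) hh.le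
    · rw [div_le_one hh]; linarith [hx.2]
  have hres := (href P M hPdeg hmomP hendP _ hsmem).2
  have hder : P.derivative = C h * p.derivative.comp (C a + C h * X) := by
    rw [hP, derivative_comp]
    congr 1
    simp
  have hde : P.derivative.eval ((x - a)/h) = h * p.derivative.eval x := by
    rw [hder]
    simp only [eval_mul, eval_C, eval_comp, eval_add, eval_X]
    congr 2
    field_simp
    ring
  rw [hde, abs_mul, abs_of_pos hh] at hres
  rw [le_div_iff₀ hh]
  calc |p.derivative.eval x| * h = h * |p.derivative.eval x| := mul_comm _ _
    _ ≤ Ck * M := hres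

/-- Existence of the local Gauss–Radau projection. -/
lemma stmt11_elem_exists (k : ℕ) (hk : 1 ≤ k) (a h : ℝ) (hh : 0 < h) (w : ℝ → ℝ)
    (hw : ContinuousOn w (Icc a (a+h))) :
    ∃ p : Polynomial ℝ, p.natDegree ≤ k ∧
      (∀ q : Polynomial ℝ, q.natDegree ≤ k - 1 →
        (∫ t in a..(a+h), p.eval t * q.eval t) = ∫ t in a..(a+h), w t * q.eval t) ∧
      p.eval (a+h) = w (a+h) := by
  have hwc : ContinuousOn (fun s => w (a + h * s)) (Icc (0:ℝ) 1) := by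
    refine hw.comp (Continuous.continuousOn (by continuity)) ?_
    intro s hs
    simp only [mem_Icc] at hs ⊢
    constructor
    · nlinarith [hs.1, hs.2]
    · nlinarith [hs.1, hs.2]
  obtain ⟨P, hPdeg, hPmom, hPend⟩ := stmt11_ref_exists k hk
    (fun j => ∫ s in (0:ℝ)..1, w (a + h * s) * s ^ (j:ℕ)) (w (a+h))
  refine ⟨P.comp (C h⁻¹ * (X - C a)), ?_, ?_, ?_⟩
  · calc (P.comp (C h⁻¹ * (X - C a))).natDegree
        ≤ P.natDegree * (C h⁻¹ * (X - C a)).natDegree := natDegree_comp_le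
      _ ≤ k * 1 := Nat.mul_le_mul hPdeg
          (le_trans (natDegree_C_mul_le _ _) (natDegree_X_sub_C _).le)
      _ = k := mul_one k
  · intro q hq
    have hqlt : q.natDegree < k := by omega
    have hcompeval : ∀ t : ℝ, (P.comp (C h⁻¹ * (X - C a))).eval t = P.eval (h⁻¹ * (t - a)) := by
      intro t; rw [eval_comp]; simp
    have hqc : ∀ s : ℝ, (q.comp (C a + C h * X)).eval s = q.eval (a + h * s) := by
      intro s; rw [eval_comp]; simp
    have hqcdeg : (q.comp (C a + C h * X)).natDegree < k := by
      have : (q.comp (C a + C h * X)).natDegree ≤ q.natDegree * 1 := by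
        refine le_trans natDegree_comp_le (Nat.mul_le_mul_left _ ?_)
        refine le_trans (natDegree_add_le _ _) ?_
        simp only [natDegree_C, max_le_iff]
        exact ⟨Nat.zero_le 1, le_trans (natDegree_C_mul_le _ _) natDegree_X_le⟩
      omega
    rw [stmt11_cov (fun t => (P.comp (C h⁻¹ * (X - C a))).eval t * q.eval t) a h hh.ne',
      stmt11_cov (fun t => w t * q.eval t) a h hh.ne']
    congr 1
    have hl : ∀ s : ℝ, (P.comp (C h⁻¹ * (X - C a))).eval (a + h * s) * q.eval (a + h * s)
        = P.eval s * (q.comp (C a + C h * X)).eval s := by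
      intro s
      rw [hcompeval, hqc]
      congr 2
      rw [add_sub_cancel_left, ← mul_assoc, inv_mul_cancel₀ hh.ne', one_mul]
    have hr : ∀ s : ℝ, w (a + h * s) * q.eval (a + h * s)
        = w (a + h * s) * (q.comp (C a + C h * X)).eval s := by
      intro s; rw [hqc]
    rw [intervalIntegral.integral_congr (fun s _ => hl s),
      intervalIntegral.integral_congr (fun s _ => hr s)]
    rw [stmt11_expand k _ hqcdeg (fun s => P.eval s) (P.continuous_aeval).continuousOn,
      stmt11_expand k _ hqcdeg (fun s => w (a + h * s)) hwc]
    refine Finset.sum_congr rfl fun j hj => ?_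
    rw [hPmom j (Finset.mem_range.1 hj)]
  · rw [eval_comp]
    simp only [eval_mul, eval_C, eval_sub, eval_X]
    rw [show h⁻¹ * (a + h - a) = 1 by field_simp; ring]
    exact hPend

/-- Restriction of iterated derivatives to a subinterval. -/
lemma stmt11_restrict {n : ℕ} {f : ℝ → ℝ} (hf : ContDiffOn ℝ n f (Icc (0:ℝ) 1))
    {a b : ℝ} (hab : a < b) (h0 : 0 ≤ a) (h1 : b ≤ 1) :
    ∀ m ≤ n, ∀ y ∈ Icc a b,
      iteratedDerivWithin m f (Icc a b) y = iteratedDerivWithin m f (Icc 0 1) y := by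
  have hsub : Icc a b ⊆ Icc (0:ℝ) 1 := Icc_subset_Icc h0 h1
  intro m
  induction m with
  | zero => intro _ y _; simp
  | succ m IH =>
    intro hm y hy
    have hm' : m ≤ n := by omega
    have hud : UniqueDiffWithinAt ℝ (Icc a b) y := (uniqueDiffOn_Icc hab) y hy
    rw [iteratedDerivWithin_succ]
    rw [derivWithin_congr (fun z hz => IH hm' z hz) (IH hm' y hy)]
    rw [derivWithin_subset hsub hud
      ((hf.differentiableOn_iteratedDerivWithin (by exact_mod_cast hm) (uniqueDiffOn_Icc
        (by norm_num))) y (hsub hy))]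
    rw [← iteratedDerivWithin_succ]

/-- Taylor approximation of the smooth part on an element, in polynomial form. -/
lemma stmt11_taylor (k : ℕ) (hk : 1 ≤ k) (S : ℝ → ℝ)
    (hS : ContDiffOn ℝ (k + 2 : ℕ) S (Icc (0:ℝ) 1)) (Cd : ℝ)
    (hbnd : ∀ m ≤ k + 2, ∀ t ∈ Icc (0:ℝ) 1, |iteratedDerivWithin m S (Icc 0 1) t| ≤ Cd)
    (a b : ℝ) (hab : a < b) (h0 : 0 ≤ a) (h1 : b ≤ 1) :
    ∃ T : Polynomial ℝ, T.natDegree ≤ k ∧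
      (∀ x ∈ Icc a b, |S x - T.eval x| ≤ Cd * (b - a) ^ (k+1)) ∧
      (∀ x ∈ Icc a b, |derivWithin S (Icc 0 1) x - T.derivative.eval x| ≤ Cd * (b - a) ^ k) := by
  have hCd : 0 ≤ Cd := le_trans (abs_nonneg _) (hbnd 0 (by omega) 0 ⟨le_refl _, by norm_num⟩)
  have hsub : Icc a b ⊆ Icc (0:ℝ) 1 := Icc_subset_Icc h0 h1
  have hamem : a ∈ Icc a b := ⟨le_refl _, hab.le⟩
  set d : ℕ → ℝ := fun m => iteratedDerivWithin m S (Icc a b) a with hd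
  set T : Polynomial ℝ :=
    ∑ m ∈ Finset.range (k+1), C ((m.factorial : ℝ)⁻¹ * d m) * (X - C a) ^ m with hT
  have hTdeg : T.natDegree ≤ k := by
    refine Polynomial.natDegree_sum_le_of_forall_le _ _ fun m hm => ?_
    refine le_trans natDegree_mul_le ?_
    simp only [natDegree_C, zero_add]
    refine le_trans natDegree_pow_le ?_
    rw [natDegree_X_sub_C, mul_one]
    exact Nat.lt_succ_iff.1 (Finset.mem_range.1 hm)
  have hTeval : ∀ x : ℝ, T.eval x = taylorWithinEval S k (Icc a b) a x := by
    intro x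
    rw [taylor_within_apply, hT, eval_finset_sum]
    refine Finset.sum_congr rfl fun m _ => ?_
    simp only [eval_mul, eval_C, eval_pow, eval_sub, eval_X, smul_eq_mul, hd]
    ring
  -- the function bound
  have hSab : ContDiffOn ℝ (k + 1 : ℕ) S (Icc a b) :=
    (hS.of_le (by exact_mod_cast (by omega : k + 1 ≤ k + 2))).mono hsub
  have hder_bound : ∀ y ∈ Icc a b, ‖iteratedDerivWithin (k+1) S (Icc a b) y‖ ≤ Cd := by
    intro y hy
    rw [Real.norm_eq_abs, stmt11_restrict hS hab h0 h1 (k+1) (by omega) y hy]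
    exact hbnd (k+1) (by omega) y (hsub hy)
  refine ⟨T, hTdeg, ?_, ?_⟩
  · intro x hx
    have := taylor_mean_remainder_bound hab.le (by exact_mod_cast hSab) hx hder_bound
    rw [← hTeval x] at this
    rw [Real.norm_eq_abs] at this
    refine le_trans this ?_
    rw [div_le_iff₀ (by positivity : (0:ℝ) < (k.factorial : ℝ))]
    have h2 : (x - a) ^ (k+1) ≤ (b - a) ^ (k+1) :=
      pow_le_pow_left₀ (by linarith [hx.1]) (by linarith [hx.2]) _
    have h3 : (1:ℝ) ≤ (k.factorial : ℝ) := by exact_mod_cast Nat.one_le_iff_ne_zero.2 (Nat.factorial_ne_zero k)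
    nlinarith [pow_nonneg (by linarith [hx.1] : (0:ℝ) ≤ x - a) (k+1),
      pow_nonneg (by linarith : (0:ℝ) ≤ b - a) (k+1), mul_nonneg hCd (pow_nonneg (by linarith : (0:ℝ) ≤ b - a) (k+1))]
  · -- derivative bound
    set g : ℝ → ℝ := fun x => derivWithin S (Icc (0:ℝ) 1) x with hg
    have hgC : ContDiffOn ℝ (k + 1 : ℕ) g (Icc (0:ℝ) 1) := by
      refine hS.derivWithin (uniqueDiffOn_Icc (by norm_num)) ?_
      exact_mod_cast (by omega : k + 1 + 1 ≤ k + 2)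
    have hgab : ContDiffOn ℝ ((k - 1) + 1 : ℕ) g (Icc a b) := by
      refine (hgC.of_le ?_).mono hsub
      exact_mod_cast (by omega : (k-1) + 1 ≤ k + 1)
    have hgiter : ∀ j ≤ k + 1, ∀ y ∈ Icc (0:ℝ) 1,
        iteratedDerivWithin j g (Icc (0:ℝ) 1) y = iteratedDerivWithin (j+1) S (Icc (0:ℝ) 1) y := by
      intro j _ y hy
      rw [iteratedDerivWithin_succ']
    have hgder_bound : ∀ y ∈ Icc a b,
        ‖iteratedDerivWithin ((k-1)+1) g (Icc a b) y‖ ≤ Cd := by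
      intro y hy
      rw [Real.norm_eq_abs, stmt11_restrict hgC hab h0 h1 ((k-1)+1) (by omega) y hy,
        hgiter ((k-1)+1) (by omega) y (hsub hy)]
      have : (k-1)+1+1 = k+1 := by omega
      rw [this]
      exact hbnd (k+1) (by omega) y (hsub hy)
    intro x hx
    have hrem := taylor_mean_remainder_bound hab.le (by exact_mod_cast hgab) hx hgder_bound
    rw [Real.norm_eq_abs] at hrem
    have hTd : T.derivative.eval x = taylorWithinEval g (k-1) (Icc a b) a x := by
      rw [taylor_within_apply, hT, derivative_sum, eval_finset_sum]
      have hterm : ∀ m : ℕ, (derivative (C ((m.factorial : ℝ)⁻¹ * d m) * (X - C a) ^ m)).eval x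
          = (m.factorial : ℝ)⁻¹ * d m * (m : ℝ) * (x - a) ^ (m - 1) := by
        intro m
        rw [derivative_C_mul, derivative_pow, derivative_X_sub_C]
        simp [mul_comm, mul_assoc, mul_left_comm]
      have hstep : ∑ m ∈ Finset.range (k+1),
            (derivative (C ((m.factorial : ℝ)⁻¹ * d m) * (X - C a) ^ m)).eval x
          = ∑ j ∈ Finset.range k, ((j.factorial : ℝ)⁻¹ * (x - a) ^ j) * d (j+1) := by
        rw [Finset.sum_range_succ' (fun m => (derivative (C ((m.factorial : ℝ)⁻¹ * d m) * (X - C a) ^ m)).eval x) k]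
        rw [hterm 0]
        simp only [Nat.cast_zero, mul_zero, zero_mul, add_zero]
        refine Finset.sum_congr rfl fun j _ => ?_
        rw [hterm (j+1), Nat.add_sub_cancel]
        push_cast
        have : (((j+1).factorial) : ℝ) = ((j:ℝ)+1) * (j.factorial : ℝ) := by
          rw [Nat.factorial_succ]; push_cast; ring
        rw [this]
        have hj1 : ((j:ℝ)+1) ≠ 0 := by positivity
        have hjf : (j.factorial : ℝ) ≠ 0 := by positivity
        field_simp
      rw [hstep]
      have hk1 : (k - 1) + 1 = k := by omega
      rw [hk1]
      refine Finset.sum_congr rfl fun j hj => ?_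
      have hjk : j + 1 ≤ k + 1 := by
        have := Finset.mem_range.1 hj; omega
      have he : iteratedDerivWithin j g (Icc a b) a = d (j+1) := by
        rw [stmt11_restrict hgC hab h0 h1 j (by omega) a hamem,
          hgiter j (by omega) a (hsub hamem), hd]
        rw [← stmt11_restrict hS hab h0 h1 (j+1) (by omega) a hamem]
      rw [he]
      simp only [smul_eq_mul]
    rw [hTd]
    refine le_trans hrem ?_
    rw [div_le_iff₀ (by positivity : (0:ℝ) < (((k-1).factorial) : ℝ))]
    have hkk : (k - 1) + 1 = k := by omega
    rw [hkk]
    have h2 : (x - a) ^ k ≤ (b - a) ^ k :=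
      pow_le_pow_left₀ (by linarith [hx.1]) (by linarith [hx.2]) _
    have h3 : (1:ℝ) ≤ (((k-1).factorial) : ℝ) := by
      exact_mod_cast Nat.one_le_iff_ne_zero.2 (Nat.factorial_ne_zero (k-1))
    nlinarith [pow_nonneg (by linarith [hx.1] : (0:ℝ) ≤ x - a) k,
      pow_nonneg (by linarith : (0:ℝ) ≤ b - a) k,
      mul_nonneg hCd (pow_nonneg (by linarith : (0:ℝ) ≤ b - a) k)]

/-- Key per-element estimate for the derivative of the projection error. -/
lemma stmt11_key (k : ℕ) (hk : 1 ≤ k) :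
    ∃ CK > 0, ∀ (S E u : ℝ → ℝ) (Cd : ℝ), 0 < Cd →
      ContDiffOn ℝ (k + 2 : ℕ) S (Icc (0:ℝ) 1) →
      ContDiffOn ℝ (k + 2 : ℕ) E (Icc (0:ℝ) 1) →
      (∀ t ∈ Icc (0:ℝ) 1, u t = S t + E t) →
      (∀ m ≤ k + 2, ∀ t ∈ Icc (0:ℝ) 1, |iteratedDerivWithin m S (Icc 0 1) t| ≤ Cd) →
      ∀ (a b : ℝ), 0 ≤ a → a < b → b ≤ 1 →
      ∀ (P : Polynomial ℝ), P.natDegree ≤ k →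
      (∀ q : Polynomial ℝ, q.natDegree ≤ k - 1 →
        (∫ t in a..b, P.eval t * q.eval t) = ∫ t in a..b, u t * q.eval t) →
      P.eval b = u b →
      ∀ ME : ℝ, (∀ t ∈ Icc a b, |E t| ≤ ME) →
      ∀ x ∈ Icc a b,
        |P.derivative.eval x - derivWithin u (Icc 0 1) x|
          ≤ CK * Cd * (b - a) ^ k + CK * ME / (b - a)
            + |derivWithin E (Icc 0 1) x| := by
  obtain ⟨Ck, hCk, helem⟩ := stmt11_elem_bound k hk
  refine ⟨Ck + 1, by linarith, ?_⟩
  intro S E u Cd hCd hS hE hu hbnd a b h0 hab h1 P hPdeg hPmom hPend ME hME x hx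
  have hsub : Icc a b ⊆ Icc (0:ℝ) 1 := Icc_subset_Icc h0 h1
  have hME0 : 0 ≤ ME := le_trans (abs_nonneg _) (hME a ⟨le_refl _, hab.le⟩)
  set h : ℝ := b - a with hhdef
  have hh : 0 < h := by rw [hhdef]; linarith
  have hab' : a + h = b := by rw [hhdef]; ring
  -- continuity
  have hScont : ContinuousOn S (Icc a b) := (hS.continuousOn).mono hsub
  have hEcont : ContinuousOn E (Icc a b) := (hE.continuousOn).mono hsub
  -- integral identities for u
  have hiu : ∀ q : Polynomial ℝ, (∫ t in a..b, u t * q.eval t)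
      = (∫ t in a..b, S t * q.eval t) + ∫ t in a..b, E t * q.eval t := by
    intro q
    have h1' : ∀ t ∈ uIcc a b, u t * q.eval t = S t * q.eval t + E t * q.eval t := by
      intro t ht
      rw [uIcc_of_le hab.le] at ht
      rw [hu t (hsub ht)]; ring
    rw [intervalIntegral.integral_congr h1', intervalIntegral.integral_add]
    · apply ContinuousOn.intervalIntegrable
      rw [uIcc_of_le hab.le]
      exact hScont.mul (q.continuous_aeval).continuousOn
    · apply ContinuousOn.intervalIntegrable
      rw [uIcc_of_le hab.le]
      exact hEcont.mul (q.continuous_aeval).continuousOn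
  -- local projection of S
  obtain ⟨pS, hpSdeg, hpSmom, hpSend⟩ := stmt11_elem_exists k hk a h hh S (hab' ▸ hScont)
  rw [hab'] at hpSmom hpSend
  -- Taylor polynomial of S
  obtain ⟨T, hTdeg, hTfun, hTder⟩ := stmt11_taylor k hk S hS Cd hbnd a b hab h0 h1
  -- integrability facts
  have hpolyint : ∀ (p : Polynomial ℝ) (q : Polynomial ℝ),
      IntervalIntegrable (fun t => p.eval t * q.eval t) MeasureTheory.volume a b :=
    fun p q => ((p.continuous_aeval).mul (q.continuous_aeval)).intervalIntegrable _ _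
  have hSint : ∀ q : Polynomial ℝ,
      IntervalIntegrable (fun t => S t * q.eval t) MeasureTheory.volume a b := by
    intro q
    apply ContinuousOn.intervalIntegrable
    rw [uIcc_of_le hab.le]
    exact hScont.mul (q.continuous_aeval).continuousOn
  -- stability for pS - T  with w = S - T
  have hres1 : ∀ y ∈ Icc a b, |(pS - T).derivative.eval y| ≤ Ck * (Cd * h ^ (k+1)) / h := by
    have := helem a h hh (pS - T) (fun t => S t - T.eval t) (Cd * h ^ (k+1))
      (le_trans (natDegree_sub_le _ _) (max_le hpSdeg hTdeg))
      (by
        intro q hq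
        rw [hab']
        have hq1 : ∫ t in a..b, (pS - T).eval t * q.eval t
            = (∫ t in a..b, pS.eval t * q.eval t) - ∫ t in a..b, T.eval t * q.eval t := by
          rw [← intervalIntegral.integral_sub (hpolyint pS q) (hpolyint T q)]
          refine intervalIntegral.integral_congr fun t _ => ?_
          simp only [eval_sub]; ring
        have hq2 : ∫ t in a..b, (S t - T.eval t) * q.eval t
            = (∫ t in a..b, S t * q.eval t) - ∫ t in a..b, T.eval t * q.eval t := by
          rw [← intervalIntegral.integral_sub (hSint q) (hpolyint T q)]
          refine intervalIntegral.integral_congr fun t _ => ?_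
          ring
        rw [hq1, hq2, hpSmom q hq])
      (by rw [hab']; simp only [eval_sub]; rw [hpSend])
      (by
        intro t ht
        rw [hab'] at ht
        rw [hhdef]
        exact hTfun t ht)
    intro y hy
    have hy' : y ∈ Icc a (a+h) := by rw [hab']; exact hy
    exact this y hy'
  -- stability for P - pS with w = E
  have hres2 : ∀ y ∈ Icc a b, |(P - pS).derivative.eval y| ≤ Ck * ME / h := by
    have := helem a h hh (P - pS) E ME
      (le_trans (natDegree_sub_le _ _) (max_le hPdeg hpSdeg))
      (by
        intro q hq
        rw [hab']
        have hq1 : ∫ t in a..b, (P - pS).eval t * q.eval t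
            = (∫ t in a..b, P.eval t * q.eval t) - ∫ t in a..b, pS.eval t * q.eval t := by
          rw [← intervalIntegral.integral_sub (hpolyint P q) (hpolyint pS q)]
          refine intervalIntegral.integral_congr fun t _ => ?_
          simp only [eval_sub]; ring
        rw [hq1, hPmom q hq, hiu q, hpSmom q hq]
        ring
      )
      (by
        rw [hab']
        simp only [eval_sub]
        rw [hPend, hpSend, hu b (hsub ⟨hab.le, le_refl _⟩)]
        ring)
      (by intro t ht; rw [hab'] at ht; exact hME t ht)
    intro y hy
    have hy' : y ∈ Icc a (a+h) := by rw [hab']; exact hy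
    exact this y hy'
  -- derivative of u splits
  have hx01 : x ∈ Icc (0:ℝ) 1 := hsub hx
  have hud : UniqueDiffWithinAt ℝ (Icc (0:ℝ) 1) x := (uniqueDiffOn_Icc (by norm_num)) x hx01
  have hu' : derivWithin u (Icc (0:ℝ) 1) x
      = derivWithin S (Icc (0:ℝ) 1) x + derivWithin E (Icc (0:ℝ) 1) x := by
    have h1' : derivWithin u (Icc (0:ℝ) 1) x = derivWithin (fun t => S t + E t) (Icc (0:ℝ) 1) x :=
      derivWithin_congr (fun t ht => hu t ht) (hu x hx01)
    rw [h1', derivWithin_fun_add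
      ((hS.differentiableOn (by simp)) x hx01)
      ((hE.differentiableOn (by simp)) x hx01)]
  -- combine
  have hsplit : P.derivative.eval x - derivWithin u (Icc (0:ℝ) 1) x
      = ((P - pS).derivative.eval x)
        + ((pS - T).derivative.eval x)
        + (T.derivative.eval x - derivWithin S (Icc (0:ℝ) 1) x)
        + (- derivWithin E (Icc (0:ℝ) 1) x) := by
    rw [hu']
    simp only [derivative_sub, eval_sub]
    ring
  have habs : |P.derivative.eval x - derivWithin u (Icc (0:ℝ) 1) x|
      ≤ |(P - pS).derivative.eval x| + |(pS - T).derivative.eval x|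
        + |T.derivative.eval x - derivWithin S (Icc (0:ℝ) 1) x|
        + |derivWithin E (Icc (0:ℝ) 1) x| := by
    rw [hsplit]
    refine le_trans (abs_add_le _ _) ?_
    rw [abs_neg]
    gcongr
    refine le_trans (abs_add_le _ _) ?_
    gcongr
    exact abs_add_le _ _
  have ht3 : |T.derivative.eval x - derivWithin S (Icc (0:ℝ) 1) x| ≤ Cd * h ^ k := by
    rw [abs_sub_comm, hhdef]
    exact hTder x hx
  have hM1 : Ck * (Cd * h ^ (k+1)) / h = Ck * Cd * h ^ k := by
    rw [pow_succ]
    field_simp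
  have hr1 := hres1 x hx
  rw [hM1] at hr1
  have hr2 := hres2 x hx
  have hfinal : Ck * Cd * h ^ k + Cd * h ^ k = (Ck + 1) * Cd * h ^ k := by ring
  rw [hhdef] at hr1 hr2 ht3 ⊢
  calc |P.derivative.eval x - derivWithin u (Icc (0:ℝ) 1) x|
      ≤ |(P - pS).derivative.eval x| + |(pS - T).derivative.eval x|
        + |T.derivative.eval x - derivWithin S (Icc (0:ℝ) 1) x|
        + |derivWithin E (Icc (0:ℝ) 1) x| := habs
    _ ≤ Ck * ME / (b - a) + Ck * Cd * (b - a) ^ k + Cd * (b - a) ^ k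
        + |derivWithin E (Icc (0:ℝ) 1) x| := by
        linarith [hr2, hr1, ht3]
    _ ≤ (Ck + 1) * Cd * (b - a) ^ k + (Ck + 1) * ME / (b - a)
        + |derivWithin E (Icc (0:ℝ) 1) x| := by
        have hle' : Ck * ME / (b - a) ≤ (Ck + 1) * ME / (b - a) := by
          have hba : (0:ℝ) < b - a := by linarith
          rw [div_le_div_iff₀ hba hba]
          nlinarith
        linarith


end Stmt11Aux

set_option maxHeartbeats 1000000 in
/-- Bound for the averaged one-sided derivatives of the Gauss–Radau projection
error `η = P⁻u − u` at the coarse-region nodes of the Shishkin mesh: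
`{η′(x_i)}² ≤ C (N^{−2k} + N^{−(k+1/2)} ε^{−3/2} N^{−σ} + ε^{−2} N^{−2σ})`
for `0 ≤ i ≤ N/2 − 1`, with `C` independent of `ε` and `N`. -/
theorem statement11 (k : ℕ) (hk : 1 ≤ k) (β σ Cd : ℝ)
    (hβ : 0 < β) (hσ : (k : ℝ) + 1 ≤ σ) (hCd : 0 < Cd) :
    ∃ C > 0, ∀ (N : ℕ) (ε τ : ℝ) (x : ℕ → ℝ) (u S E : ℝ → ℝ)
      (Pu : ℕ → Polynomial ℝ),
      4 ≤ N → N % 2 = 0 →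
      0 < ε → ε ≤ (N : ℝ)⁻¹ →
      τ = σ * ε / β * Real.log N → τ ≤ 1 / 2 →
      (∀ i ≤ N / 2, x i = 2 * (1 - τ) * i / N) →
      (∀ i, N / 2 < i → i ≤ N → x i = 1 - τ + 2 * τ * ((i : ℝ) - (N / 2 : ℕ)) / N) →
      ContDiffOn ℝ (k + 2 : ℕ) S (Icc 0 1) →
      ContDiffOn ℝ (k + 2 : ℕ) E (Icc 0 1) →
      (∀ t ∈ Icc (0:ℝ) 1, u t = S t + E t) →
      (∀ m ≤ k + 2, ∀ t ∈ Icc (0:ℝ) 1,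
        |iteratedDerivWithin m S (Icc 0 1) t| ≤ Cd) →
      (∀ m ≤ k + 2, ∀ t ∈ Icc (0:ℝ) 1,
        |iteratedDerivWithin m E (Icc 0 1) t| ≤
          Cd / ε ^ m * Real.exp (-β * (1 - t) / ε)) →
      (∀ i ∈ Finset.Icc 1 N, (Pu i).natDegree ≤ k) →
      (∀ i ∈ Finset.Icc 1 N, ∀ q : Polynomial ℝ, q.natDegree ≤ k - 1 →
        (∫ t in (x (i - 1))..(x i), (Pu i).eval t * q.eval t)
          = ∫ t in (x (i - 1))..(x i), u t * q.eval t) →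
      (∀ i ∈ Finset.Icc 1 N, (Pu i).eval (x i) = u (x i)) →
      ∀ i ∈ Finset.Icc 0 (N / 2 - 1),
        (if i = 0 then
            ((Pu 1).derivative).eval (x 0) - derivWithin u (Icc 0 1) (x 0)
          else
            (((Pu i).derivative).eval (x i) + ((Pu (i + 1)).derivative).eval (x i)) / 2
              - derivWithin u (Icc 0 1) (x i)) ^ 2
        ≤ C * ((N : ℝ) ^ (-(2 * (k : ℝ)))
            + (N : ℝ) ^ (-((k : ℝ) + 1 / 2)) * ε ^ ((-3 : ℝ) / 2) * (N : ℝ) ^ (-σ)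
            + ε ^ (-2 : ℝ) * (N : ℝ) ^ (-(2 * σ))) := by
  obtain ⟨CK, hCK, hKey⟩ := stmt11_key k hk
  set c1 : ℝ := CK * Cd * 2 ^ k with hc1
  set c2 : ℝ := CK * Cd + Cd with hc2
  have hc1pos : 0 < c1 := by rw [hc1]; positivity
  have hc2pos : 0 < c2 := by rw [hc2]; positivity
  refine ⟨2 * c1 ^ 2 + 2 * c2 ^ 2 + 1, by positivity, ?_⟩
  intro N ε τ x u S E Pu hN4 hNeven hε hεN hτdef hτhalf hx1 hx2 hS hE hu hSb hEb
    hPudeg hPumom hPuend i hi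
  -- basic numeric facts
  have hN4R : (4:ℝ) ≤ (N:ℝ) := by exact_mod_cast hN4
  have hN0 : (0:ℝ) < (N:ℝ) := by linarith
  have hN1 : (1:ℝ) < (N:ℝ) := by linarith
  have hσ0 : 0 < σ := lt_of_lt_of_le (by positivity) hσ
  have hτ0 : 0 ≤ τ := by
    rw [hτdef]
    have := Real.log_pos hN1
    positivity
  have h1τa : (1:ℝ)/2 ≤ 1 - τ := by linarith
  have h1τb : 1 - τ ≤ 1 := by linarith
  have hNε : (N:ℝ) ≤ ε⁻¹ := by
    have h1 : ((N:ℝ)⁻¹)⁻¹ ≤ ε⁻¹ := by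
      apply inv_anti₀ hε hεN
    rwa [inv_inv] at h1
  have hεinv0 : (0:ℝ) < ε⁻¹ := by positivity
  have hNσ0 : (0:ℝ) ≤ (N:ℝ) ^ (-σ) := Real.rpow_nonneg hN0.le _
  -- exponential bound in the coarse region
  have hexp : ∀ t : ℝ, t ≤ 1 - τ → Real.exp (-β * (1 - t) / ε) ≤ (N:ℝ) ^ (-σ) := by
    intro t ht
    have hβτ : β * τ / ε = σ * Real.log N := by
      rw [hτdef]
      field_simp
    have h2 : β * τ ≤ β * (1 - t) := mul_le_mul_of_nonneg_left (by linarith) hβ.le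
    have h3 : -β * (1 - t) / ε ≤ -(σ * Real.log N) := by
      rw [← hβτ]
      have h3a : β * τ / ε ≤ β * (1 - t) / ε := by
        rw [div_le_div_iff₀ hε hε]
        nlinarith
      have h3b : -β * (1 - t) / ε = -(β * (1 - t) / ε) := by ring
      rw [h3b]
      linarith
    have h4 : (N:ℝ) ^ (-σ) = Real.exp (-(σ * Real.log N)) := by
      rw [Real.rpow_def_of_pos hN0]
      congr 1
      ring
    rw [h4]
    exact Real.exp_le_exp.2 h3
  -- coarse mesh size
  set hc : ℝ := 2 * (1 - τ) / N with hhc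
  have hc0 : 0 < hc := by
    rw [hhc]
    apply div_pos (by linarith) hN0
  have hcup : hc ≤ 2 / N := by
    rw [hhc]
    gcongr
    linarith
  have hclow : 1 / (N:ℝ) ≤ hc := by
    rw [hhc, div_le_div_iff₀ hN0 hN0]
    nlinarith
  -- membership facts
  rw [Finset.mem_Icc] at hi
  have hi2 : i ≤ N / 2 - 1 := hi.2
  have hN2 : 2 ≤ N / 2 := by omega
  have hi1 : i + 1 ≤ N / 2 := by omega
  -- mesh increment
  have hbaall : ∀ j : ℕ, 1 ≤ j → j ≤ N / 2 → x j - x (j-1) = hc := by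
    intro j hj1 hj2
    have hcast : ((j-1:ℕ):ℝ) = (j:ℝ) - 1 := by
      rw [Nat.cast_sub hj1, Nat.cast_one]
    rw [hx1 j hj2, hx1 (j-1) (by omega), hcast, hhc]
    field_simp
    ring
  -- the per-element claim
  have claim : ∀ j : ℕ, 1 ≤ j → j ≤ N / 2 → ∀ y ∈ Icc (x (j-1)) (x j),
      |(Pu j).derivative.eval y - derivWithin u (Icc 0 1) y|
        ≤ c1 * ((N:ℝ) ^ k)⁻¹ + c2 * (ε⁻¹ * (N:ℝ) ^ (-σ)) := by
    intro j hj1 hj2 y hy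
    have hjN : j ≤ N := le_trans hj2 (Nat.div_le_self N 2)
    have hjmem : j ∈ Finset.Icc 1 N := Finset.mem_Icc.2 ⟨hj1, hjN⟩
    have h2j : (2:ℝ) * j ≤ N := by
      have : 2 * j ≤ N := by omega
      exact_mod_cast this
    have hcast : ((j-1:ℕ):ℝ) = (j:ℝ) - 1 := by
      rw [Nat.cast_sub hj1, Nat.cast_one]
    have ha : x (j-1) = 2 * (1 - τ) * ((j:ℝ) - 1) / N := by
      rw [hx1 (j-1) (by omega), hcast]
    have hb : x j = 2 * (1 - τ) * j / N := hx1 j hj2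
    have hba : x j - x (j-1) = hc := hbaall j hj1 hj2
    have hj1R : (1:ℝ) ≤ (j:ℝ) := by exact_mod_cast hj1
    have h0a : 0 ≤ x (j-1) := by
      rw [ha]
      apply div_nonneg _ hN0.le
      nlinarith
    have hb1τ : x j ≤ 1 - τ := by
      rw [hb, div_le_iff₀ hN0]
      nlinarith [mul_nonneg (by linarith : (0:ℝ) ≤ 1 - τ) (by linarith : (0:ℝ) ≤ (N:ℝ) - 2 * j)]
    have hab : x (j-1) < x j := by
      have := hc0
      linarith [hba]
    have hb1 : x j ≤ 1 := by linarith
    have hyIcc : y ∈ Icc (0:ℝ) 1 :=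
      ⟨le_trans h0a hy.1, le_trans hy.2 hb1⟩
    -- bound for E on the element
    have hME : ∀ t ∈ Icc (x (j-1)) (x j), |E t| ≤ Cd * (N:ℝ) ^ (-σ) := by
      intro t ht
      have htIcc : t ∈ Icc (0:ℝ) 1 := ⟨le_trans h0a ht.1, le_trans ht.2 hb1⟩
      have h5 := hEb 0 (by omega) t htIcc
      simp only [pow_zero, div_one, iteratedDerivWithin_zero] at h5
      refine le_trans h5 ?_
      exact mul_le_mul_of_nonneg_left (hexp t (le_trans ht.2 hb1τ)) hCd.le
    have hkey := hKey S E u Cd hCd hS hE hu hSb (x (j-1)) (x j) h0a hab hb1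
      (Pu j) (hPudeg j hjmem) (hPumom j hjmem) (hPuend j hjmem)
      (Cd * (N:ℝ) ^ (-σ)) hME y hy
    refine le_trans hkey ?_
    -- term 1
    have hT1 : CK * Cd * (x j - x (j-1)) ^ k ≤ c1 * ((N:ℝ) ^ k)⁻¹ := by
      rw [hba, hc1]
      have h6 : hc ^ k ≤ (2 / N) ^ k := pow_le_pow_left₀ hc0.le hcup k
      have h7 : ((2:ℝ) / N) ^ k = 2 ^ k * ((N:ℝ) ^ k)⁻¹ := by
        rw [div_pow, div_eq_mul_inv]
      calc CK * Cd * hc ^ k ≤ CK * Cd * ((2:ℝ) / N) ^ k := by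
            exact mul_le_mul_of_nonneg_left h6 (by positivity)
        _ = CK * Cd * 2 ^ k * ((N:ℝ) ^ k)⁻¹ := by rw [h7]; ring
    -- term 2
    have hT2 : CK * (Cd * (N:ℝ) ^ (-σ)) / (x j - x (j-1))
        ≤ CK * Cd * (ε⁻¹ * (N:ℝ) ^ (-σ)) := by
      rw [hba, div_le_iff₀ hc0]
      have h8 : (1:ℝ) ≤ ε⁻¹ * hc := by
        calc (1:ℝ) = (N:ℝ) * (1 / N) := by field_simp
          _ ≤ ε⁻¹ * hc := by
              apply mul_le_mul hNε hclow (by positivity) hεinv0.le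
      nlinarith [mul_nonneg (mul_nonneg hCK.le hCd.le) hNσ0]
    -- term 3
    have hT3 : |derivWithin E (Icc (0:ℝ) 1) y| ≤ Cd * (ε⁻¹ * (N:ℝ) ^ (-σ)) := by
      have hud : UniqueDiffWithinAt ℝ (Icc (0:ℝ) 1) y :=
        (uniqueDiffOn_Icc (by norm_num)) y hyIcc
      have h9 := hEb 1 (by omega) y hyIcc
      rw [iteratedDerivWithin_one] at h9
      refine le_trans h9 ?_
      rw [pow_one, div_eq_mul_inv]
      calc Cd * ε⁻¹ * Real.exp (-β * (1 - y) / ε)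
          ≤ Cd * ε⁻¹ * ((N:ℝ) ^ (-σ)) := by
            exact mul_le_mul_of_nonneg_left (hexp y (le_trans hy.2 hb1τ)) (by positivity)
        _ = Cd * (ε⁻¹ * (N:ℝ) ^ (-σ)) := by ring
    rw [hc2]
    have : (CK * Cd + Cd) * (ε⁻¹ * (N:ℝ) ^ (-σ))
        = CK * Cd * (ε⁻¹ * (N:ℝ) ^ (-σ)) + Cd * (ε⁻¹ * (N:ℝ) ^ (-σ)) := by ring
    rw [this]
    linarith
  -- the nodal value is bounded by A + B
  set A : ℝ := c1 * ((N:ℝ) ^ k)⁻¹ with hA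
  set B : ℝ := c2 * (ε⁻¹ * (N:ℝ) ^ (-σ)) with hB
  have hval : |(if i = 0 then
            ((Pu 1).derivative).eval (x 0) - derivWithin u (Icc 0 1) (x 0)
          else
            (((Pu i).derivative).eval (x i) + ((Pu (i + 1)).derivative).eval (x i)) / 2
              - derivWithin u (Icc 0 1) (x i))| ≤ A + B := by
    by_cases h0 : i = 0
    · rw [if_pos h0]
      have hd1 := hbaall 1 le_rfl (by omega)
      norm_num at hd1
      have hmem : x 0 ∈ Icc (x ((1:ℕ)-1)) (x 1) := by
        have h01 : x 0 ≤ x 1 := by linarith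
        simp only [Nat.sub_self]
        exact ⟨le_refl _, h01⟩
      exact claim 1 le_rfl (by omega) (x 0) hmem
    · rw [if_neg h0]
      have hi1' : 1 ≤ i := by omega
      have hd1 := hbaall i hi1' (by omega)
      have hd2 := hbaall (i+1) (by omega) hi1
      have hii : (i+1) - 1 = i := by omega
      rw [hii] at hd2
      have hmem1 : x i ∈ Icc (x (i-1)) (x i) := ⟨by linarith, le_refl _⟩
      have hmem2 : x i ∈ Icc (x ((i+1)-1)) (x (i+1)) := by
        rw [hii]
        exact ⟨le_refl _, by linarith⟩
      have he1 := claim i hi1' (by omega) (x i) hmem1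
      have he2 := claim (i+1) (by omega) hi1 (x i) hmem2
      have hsplit : ((Pu i).derivative.eval (x i) + (Pu (i+1)).derivative.eval (x i)) / 2
            - derivWithin u (Icc 0 1) (x i)
          = (((Pu i).derivative.eval (x i) - derivWithin u (Icc 0 1) (x i))
            + ((Pu (i+1)).derivative.eval (x i) - derivWithin u (Icc 0 1) (x i))) / 2 := by
        ring
      rw [hsplit, abs_div, abs_two]
      have := abs_add_le ((Pu i).derivative.eval (x i) - derivWithin u (Icc 0 1) (x i))
        ((Pu (i+1)).derivative.eval (x i) - derivWithin u (Icc 0 1) (x i))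
      linarith
  -- squaring
  have hA0 : 0 ≤ A := by rw [hA]; positivity
  have hB0 : 0 ≤ B := by rw [hB]; positivity
  have hsq : (if i = 0 then
            ((Pu 1).derivative).eval (x 0) - derivWithin u (Icc 0 1) (x 0)
          else
            (((Pu i).derivative).eval (x i) + ((Pu (i + 1)).derivative).eval (x i)) / 2
              - derivWithin u (Icc 0 1) (x i)) ^ 2 ≤ (A + B) ^ 2 := by
    rw [← sq_abs]
    exact pow_le_pow_left₀ (abs_nonneg _) hval 2
  refine le_trans hsq ?_
  -- convert to rpow form
  have hX : (((N:ℝ) ^ k)⁻¹) ^ 2 = (N:ℝ) ^ (-(2 * (k:ℝ))) := by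
    rw [← Real.rpow_natCast (N:ℝ) k, ← Real.rpow_neg hN0.le,
      ← Real.rpow_natCast ((N:ℝ) ^ (-(k:ℝ))) 2, ← Real.rpow_mul hN0.le]
    congr 1
    push_cast
    ring
  have hZ : (ε⁻¹) ^ 2 * ((N:ℝ) ^ (-σ)) ^ 2 = ε ^ (-2:ℝ) * (N:ℝ) ^ (-(2 * σ)) := by
    have hz1 : (ε⁻¹) ^ 2 = ε ^ (-2:ℝ) := by
      rw [← Real.rpow_natCast (ε⁻¹) 2, ← Real.rpow_neg_one ε, ← Real.rpow_mul hε.le]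
      norm_num
    have hz2 : ((N:ℝ) ^ (-σ)) ^ 2 = (N:ℝ) ^ (-(2 * σ)) := by
      rw [← Real.rpow_natCast ((N:ℝ) ^ (-σ)) 2, ← Real.rpow_mul hN0.le]
      congr 1
      push_cast
      ring
    rw [hz1, hz2]
  have hY0 : 0 ≤ (N:ℝ) ^ (-((k:ℝ) + 1/2)) * ε ^ ((-3:ℝ)/2) * (N:ℝ) ^ (-σ) := by
    have := Real.rpow_nonneg hN0.le (-((k:ℝ) + 1/2))
    have := Real.rpow_nonneg hε.le ((-3:ℝ)/2)
    positivity
  have hX0 : 0 ≤ (N:ℝ) ^ (-(2 * (k:ℝ))) := Real.rpow_nonneg hN0.le _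
  have hZ0 : 0 ≤ ε ^ (-2:ℝ) * (N:ℝ) ^ (-(2 * σ)) := by
    have := Real.rpow_nonneg hε.le (-2:ℝ)
    have := Real.rpow_nonneg hN0.le (-(2*σ))
    positivity
  have hAB : (A + B) ^ 2 ≤ 2 * A ^ 2 + 2 * B ^ 2 := by nlinarith [sq_nonneg (A - B)]
  have hA2 : A ^ 2 = c1 ^ 2 * (N:ℝ) ^ (-(2 * (k:ℝ))) := by
    rw [hA, mul_pow, hX]
  have hB2 : B ^ 2 = c2 ^ 2 * (ε ^ (-2:ℝ) * (N:ℝ) ^ (-(2 * σ))) := by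
    rw [hB, mul_pow, mul_pow, hZ]
  refine le_trans hAB ?_
  rw [hA2, hB2]
  set X := (N:ℝ) ^ (-(2 * (k:ℝ)))
  set Y := (N:ℝ) ^ (-((k:ℝ) + 1/2)) * ε ^ ((-3:ℝ)/2) * (N:ℝ) ^ (-σ)
  set Z := ε ^ (-2:ℝ) * (N:ℝ) ^ (-(2 * σ))
  have hc12 : 0 ≤ c1 ^ 2 := sq_nonneg _
  have hc22 : 0 ≤ c2 ^ 2 := sq_nonneg _
  have e1 : (2 * c1 ^ 2 + 2 * c2 ^ 2 + 1) * (X + Y + Z)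
      = 2 * (c1 ^ 2 * X) + 2 * (c2 ^ 2 * Z)
        + ((2 * c2 ^ 2 + 1) * X + (2 * c1 ^ 2 + 2 * c2 ^ 2 + 1) * Y + (2 * c1 ^ 2 + 1) * Z) := by
    ring
  have e2 : 0 ≤ (2 * c2 ^ 2 + 1) * X := mul_nonneg (by positivity) hX0
  have e3 : 0 ≤ (2 * c1 ^ 2 + 2 * c2 ^ 2 + 1) * Y := mul_nonneg (by positivity) hY0
  have e4 : 0 ≤ (2 * c1 ^ 2 + 1) * Z := mul_nonneg (by positivity) hZ0
  linarith
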